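/- Let n ≥ k ≥ 3 be integers, let y ∈ ℝⁿ with 0 < ‖y‖ < 1, and let W be the Brendle–Hung vector field on the open unit ball minus {y}. Then for every x with ‖x‖ < 1 and x ≠ y, every k-dimensional linear subspace S ⊆ ℝⁿ, and every orthonormal basis (e₁, …, e_k) of S, one has ∑_{i=1}^{k} ⟨(D W)(x)[e_i], e_i⟩ ≤ 1, with equality if and only if x − y ∈ S and y is orthogonal to S. -/

import Mathlib

open RealInnerProductSpace

/-- The Brendle–Hung vector field on the unit ball of `ℝⁿ` minus the prescribed point `y`. -/
noncomputable def brendleHungW (n k : ℕ) (y : EuclideanSpace ℝ (Fin n)) :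
    EuclideanSpace ℝ (Fin n) → EuclideanSpace ℝ (Fin n) := fun x =>
  ((1 / (k : ℝ)) *
      (1 - (1 - 2 * ⟪x, y⟫ + ‖y‖ ^ 2) ^ ((k : ℝ) / 2) / ‖x - y‖ ^ k)) • (x - y) +
  ((1 / ((k : ℝ) - 2)) *
      ((1 - 2 * ⟪x, y⟫ + ‖y‖ ^ 2) ^ (((k : ℝ) - 2) / 2) / ‖x - y‖ ^ (k - 2) - 1)) • y

set_option maxHeartbeats 2000000

private lemma rpow_div_pow (Q r : ℝ) (hQ : 0 < Q) (hr : 0 < r) (m : ℕ) :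
    Q ^ ((m:ℝ)/2) / r ^ m = (Q * (r^2) ^ (-(1:ℝ))) ^ ((m:ℝ)/2) := by
  have h2 : ((r^2 : ℝ)) ^ ((m:ℝ)/2) = r ^ m := by
    rw [← Real.rpow_natCast r 2, ← Real.rpow_mul hr.le, ← Real.rpow_natCast r m]
    congr 1; ring
  rw [Real.rpow_neg_one, Real.mul_rpow hQ.le (by positivity),
    Real.inv_rpow (by positivity), h2, div_eq_mul_inv]

set_option maxHeartbeats 2000000 in
private lemma key (n k : ℕ) (hk : 3 ≤ k) (y x : EuclideanSpace ℝ (Fin n))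
    (hx1 : ‖x‖ < 1) (hxy : x ≠ y) (v : EuclideanSpace ℝ (Fin n)) :
    ⟪fderiv ℝ (brendleHungW n k y) x v, v⟫ =
      (1/(k:ℝ)) * (1 - ((1 - 2*⟪x,y⟫ + ‖y‖^2)/‖x-y‖^2) ^ ((k:ℝ)/2)) * ‖v‖^2
      + (((1 - 2*⟪x,y⟫ + ‖y‖^2)/‖x-y‖^2) ^ ((k:ℝ)/2 - 2) / ‖x-y‖^2) *
          ((((1 - 2*⟪x,y⟫ + ‖y‖^2)/‖x-y‖^2))^2 * ⟪x-y,v⟫^2 - ⟪y,v⟫^2) := by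
  classical
  have hu0 : x - y ≠ 0 := sub_ne_zero.mpr hxy
  have hr : (0:ℝ) < ‖x - y‖ := norm_pos_iff.mpr hu0
  have hR : (0:ℝ) < ‖x - y‖^2 := by positivity
  have hQ : (0:ℝ) < 1 - 2*⟪x,y⟫ + ‖y‖^2 := by
    have hexp : ‖x - y‖^2 = ‖x‖^2 - 2*⟪x,y⟫ + ‖y‖^2 := by
      rw [norm_sub_sq_real]
    nlinarith [hR, hexp, norm_nonneg x, hx1]
  -- local functions
  set g : EuclideanSpace ℝ (Fin n) → ℝ := fun z => 1 - 2*⟪z,y⟫ + ‖y‖^2 with hgdef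
  set φ : EuclideanSpace ℝ (Fin n) → ℝ := fun z => ‖z - y‖^2 with hφdef
  set t : EuclideanSpace ℝ (Fin n) → ℝ := fun z => g z * φ z ^ (-(1:ℝ)) with htdef
  set p : ℝ := (k:ℝ)/2 with hpdef
  set F : EuclideanSpace ℝ (Fin n) → EuclideanSpace ℝ (Fin n) := fun z =>
    ((1/(k:ℝ)) * (1 - t z ^ p)) • (z - y) + ((1/((k:ℝ)-2)) * (t z ^ (p-1) - 1)) • y
    with hFdef
  have hφx : φ x = ‖x - y‖^2 := rfl
  have hgx : g x = 1 - 2*⟪x,y⟫ + ‖y‖^2 := rfl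
  have htx : t x = (1 - 2*⟪x,y⟫ + ‖y‖^2) / ‖x - y‖^2 := by
    rw [htdef]; simp only [hgx, hφx, Real.rpow_neg_one]; rw [div_eq_mul_inv]
  have hT : (0:ℝ) < t x := by rw [htx]; positivity
  -- derivatives
  have hg : HasFDerivAt g ((-2 : ℝ) • (innerSL ℝ y)) x := by
    have h1 : HasFDerivAt (fun z : EuclideanSpace ℝ (Fin n) => ⟪z, y⟫) (innerSL ℝ y) x := by
      have : (fun z : EuclideanSpace ℝ (Fin n) => ⟪z,y⟫) = fun z => (innerSL ℝ y) z := by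
        funext z; simp only [innerSL_apply_apply]; exact real_inner_comm y z
      rw [this]; exact (innerSL ℝ y).hasFDerivAt
    have := ((h1.const_mul 2).const_sub 1).add_const (‖y‖^2)
    exact this.congr_fderiv (by ext w; simp)
  have hφ : HasFDerivAt φ ((2:ℝ) • (innerSL ℝ (x-y))) x := by
    have := ((hasFDerivAt_id x).sub_const y).norm_sq
    exact this.congr_fderiv (by ext w; simp)
  have hψ : HasFDerivAt (fun z => φ z ^ (-(1:ℝ)))
      ((-1 * φ x ^ (-(1:ℝ)-1)) • ((2:ℝ) • (innerSL ℝ (x-y)))) x :=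
    hφ.rpow_const (Or.inl hR.ne')
  have ht : HasFDerivAt t
      (g x • ((-1 * φ x ^ (-(1:ℝ)-1)) • ((2:ℝ) • (innerSL ℝ (x-y)))) +
        (φ x ^ (-(1:ℝ))) • ((-2 : ℝ) • (innerSL ℝ y))) x := by
    have := hg.mul hψ
    exact this
  set Dt : EuclideanSpace ℝ (Fin n) →L[ℝ] ℝ :=
      g x • ((-1 * φ x ^ (-(1:ℝ)-1)) • ((2:ℝ) • (innerSL ℝ (x-y)))) +
        (φ x ^ (-(1:ℝ))) • ((-2 : ℝ) • (innerSL ℝ y)) with hDtdef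
  have hA : HasFDerivAt (fun z => (1/(k:ℝ)) * (1 - t z ^ p))
      ((1/(k:ℝ)) • (-((p * t x ^ (p-1)) • Dt))) x :=
    (((ht.rpow_const (Or.inl hT.ne')).const_sub 1)).const_mul (1/(k:ℝ))
  have hB : HasFDerivAt (fun z => (1/((k:ℝ)-2)) * (t z ^ (p-1) - 1))
      ((1/((k:ℝ)-2)) • (((p-1) * t x ^ (p-1-1)) • Dt)) x :=
    (((ht.rpow_const (Or.inl hT.ne')).sub_const 1)).const_mul (1/((k:ℝ)-2))
  have hFd : HasFDerivAt F
      (((1/(k:ℝ)) * (1 - t x ^ p)) • (ContinuousLinearMap.id ℝ (EuclideanSpace ℝ (Fin n))) +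
        ((1/(k:ℝ)) • (-((p * t x ^ (p-1)) • Dt))).smulRight (x - y) +
       (((1/((k:ℝ)-2)) * (t x ^ (p-1) - 1)) • (0 : EuclideanSpace ℝ (Fin n) →L[ℝ] EuclideanSpace ℝ (Fin n)) +
        ((1/((k:ℝ)-2)) • (((p-1) * t x ^ (p-1-1)) • Dt)).smulRight y)) x := by
    exact (hA.smul ((hasFDerivAt_id x).sub_const y)).add (hB.smul (hasFDerivAt_const y x))
  -- the vector field agrees with F near x
  have hWF : brendleHungW n k y =ᶠ[nhds x] F := by
    have hopen : IsOpen {z : EuclideanSpace ℝ (Fin n) | ‖z‖ < 1 ∧ z ≠ y} :=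
      (isOpen_lt continuous_norm continuous_const).inter isOpen_ne
    refine Filter.eventuallyEq_of_mem (hopen.mem_nhds ⟨hx1, hxy⟩) ?_
    rintro z ⟨hz1, hzy⟩
    have hz0 : z - y ≠ 0 := sub_ne_zero.mpr hzy
    have hrz : (0:ℝ) < ‖z - y‖ := norm_pos_iff.mpr hz0
    have hQz : (0:ℝ) < 1 - 2*⟪z,y⟫ + ‖y‖^2 := by
      have hexp : ‖z - y‖^2 = ‖z‖^2 - 2*⟪z,y⟫ + ‖y‖^2 := by rw [norm_sub_sq_real]
      nlinarith [norm_nonneg z, hz1, hrz, sq_nonneg ‖z - y‖, hrz.le, pow_pos hrz 2]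
    show brendleHungW n k y z = F z
    have e1 : (1 - 2*⟪z,y⟫ + ‖y‖^2) ^ ((k:ℝ)/2) / ‖z-y‖^k
        = ((1 - 2*⟪z,y⟫ + ‖y‖^2) * (‖z-y‖^2) ^ (-(1:ℝ))) ^ ((k:ℝ)/2) :=
      rpow_div_pow _ _ hQz hrz k
    have hc : ((k:ℝ) - 2) = ((k-2 : ℕ) : ℝ) := by
      have h2 : (2:ℕ) ≤ k := by omega
      rw [Nat.cast_sub h2]; norm_num
    have hp1 : p - 1 = ((k-2:ℕ):ℝ)/2 := by rw [hpdef, ← hc]; ring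
    have e2 : (1 - 2*⟪z,y⟫ + ‖y‖^2) ^ (((k:ℝ)-2)/2) / ‖z-y‖^(k-2)
        = ((1 - 2*⟪z,y⟫ + ‖y‖^2) * (‖z-y‖^2) ^ (-(1:ℝ))) ^ (p - 1) := by
      rw [hc, hp1]; exact rpow_div_pow _ _ hQz hrz (k-2)
    rw [hFdef]
    simp only [htdef, hgdef, hφdef, brendleHungW]
    rw [e1, e2, hpdef]
  rw [hWF.fderiv_eq, hFd.fderiv]
  have hk3 : (3:ℝ) ≤ (k:ℝ) := by exact_mod_cast hk
  have hk0 : (k:ℝ) ≠ 0 := by linarith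
  have hk2 : (k:ℝ) - 2 ≠ 0 := by linarith
  have hU : (0:ℝ) < (1 - 2*⟪x,y⟫ + ‖y‖^2)/‖x-y‖^2 := by positivity
  have eU1 : ((1 - 2*⟪x,y⟫ + ‖y‖^2)/‖x-y‖^2) ^ (p - 1)
      = ((1 - 2*⟪x,y⟫ + ‖y‖^2)/‖x-y‖^2) ^ p / (((1 - 2*⟪x,y⟫ + ‖y‖^2)/‖x-y‖^2)) := by
    rw [Real.rpow_sub hU, Real.rpow_one]
  have eU2 : ((1 - 2*⟪x,y⟫ + ‖y‖^2)/‖x-y‖^2) ^ (p - 1 - 1)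
      = ((1 - 2*⟪x,y⟫ + ‖y‖^2)/‖x-y‖^2) ^ p / (((1 - 2*⟪x,y⟫ + ‖y‖^2)/‖x-y‖^2))^2 := by
    rw [show p - 1 - 1 = p - 2 by ring, Real.rpow_sub hU, Real.rpow_two]
  have eT3 : ((1 - 2*⟪x,y⟫ + ‖y‖^2)/‖x-y‖^2) ^ ((k:ℝ)/2 - 2)
      = ((1 - 2*⟪x,y⟫ + ‖y‖^2)/‖x-y‖^2) ^ ((k:ℝ)/2)
        / ((1 - 2*⟪x,y⟫ + ‖y‖^2)/‖x-y‖^2)^2 := by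
    rw [Real.rpow_sub (by positivity), Real.rpow_two]
  have hφ1 : φ x ^ (-(1:ℝ)) = (‖x-y‖^2)⁻¹ := by rw [hφx, Real.rpow_neg_one]
  have hφ2 : φ x ^ (-(1:ℝ)-1) = ((‖x-y‖^2)^2)⁻¹ := by
    rw [hφx, show (-(1:ℝ)-1) = -(2:ℝ) by ring, Real.rpow_neg hR.le, Real.rpow_two]
  rw [eT3]
  simp only [hDtdef, ContinuousLinearMap.add_apply, ContinuousLinearMap.smul_apply,
    ContinuousLinearMap.coe_smul', Pi.smul_apply, ContinuousLinearMap.smulRight_apply,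
    ContinuousLinearMap.id_apply, ContinuousLinearMap.zero_apply,
    ContinuousLinearMap.neg_apply, innerSL_apply_apply, smul_eq_mul,
    inner_add_left, real_inner_smul_left, inner_zero_left,
    real_inner_self_eq_norm_sq, eT3, hφ1, hφ2, htx, hgx, eU1, eU2]
  rw [hpdef]
  set al := ⟪x-y, v⟫ with hal
  set be := ⟪y, v⟫ with hbe
  set NN := ‖v‖^2 with hNN
  set QQ := 1 - 2*⟪x,y⟫ + ‖y‖^2 with hQQ
  set RR := ‖x-y‖^2 with hRR
  set PP := (QQ/RR) ^ ((k:ℝ)/2) with hPP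
  field_simp [hk0, hk2, hQ.ne', hR.ne']
  ring

set_option maxHeartbeats 1000000 in
theorem stmt_15 (n k : ℕ) (hk : 3 ≤ k) (hkn : k ≤ n)
    (y : EuclideanSpace ℝ (Fin n)) (hy0 : 0 < ‖y‖) (hy1 : ‖y‖ < 1)
    (x : EuclideanSpace ℝ (Fin n)) (hx : ‖x‖ < 1) (hxy : x ≠ y)
    (S : Submodule ℝ (EuclideanSpace ℝ (Fin n))) (hS : Module.finrank ℝ S = k)
    (e : Fin k → EuclideanSpace ℝ (Fin n)) (he : Orthonormal ℝ e) (heS : ∀ i, e i ∈ S) :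
    (∑ i, ⟪fderiv ℝ (brendleHungW n k y) x (e i), e i⟫) ≤ 1 ∧
    ((∑ i, ⟪fderiv ℝ (brendleHungW n k y) x (e i), e i⟫) = 1 ↔
      (x - y ∈ S ∧ ∀ v ∈ S, ⟪y, v⟫ = 0)) := by
  classical
  have hu0 : x - y ≠ 0 := sub_ne_zero.mpr hxy
  have hr : (0:ℝ) < ‖x - y‖ := norm_pos_iff.mpr hu0
  have hR : (0:ℝ) < ‖x - y‖^2 := by positivity
  have hQ : (0:ℝ) < 1 - 2*⟪x,y⟫ + ‖y‖^2 := by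
    have hexp : ‖x - y‖^2 = ‖x‖^2 - 2*⟪x,y⟫ + ‖y‖^2 := by rw [norm_sub_sq_real]
    nlinarith [hR, norm_nonneg x, hx]
  have hk0 : (k:ℝ) ≠ 0 := by
    have : (3:ℝ) ≤ (k:ℝ) := by exact_mod_cast hk
    linarith
  have hkey := fun i => key n k hk y x hx hxy (e i)
  set T := (1 - 2*⟪x,y⟫ + ‖y‖^2)/‖x-y‖^2 with hTdef
  have hT : 0 < T := by rw [hTdef]; positivity
  set P := T ^ ((k:ℝ)/2) with hPdef
  have hP : 0 < P := Real.rpow_pos_of_pos hT _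
  set C := T ^ ((k:ℝ)/2 - 2) / ‖x-y‖^2 with hCdef
  have hC : 0 < C := div_pos (Real.rpow_pos_of_pos hT _) hR
  have hPeq : P = C * T^2 * ‖x-y‖^2 := by
    rw [hCdef, hPdef, Real.rpow_sub hT, Real.rpow_two]
    field_simp
  -- the sum formula
  have hsum : (∑ i, ⟪fderiv ℝ (brendleHungW n k y) x (e i), e i⟫)
      = 1 - P + C * T^2 * (∑ i, ⟪x-y, e i⟫^2) - C * (∑ i, ⟪y, e i⟫^2) := by
    have h1 : ∀ i ∈ Finset.univ, ⟪fderiv ℝ (brendleHungW n k y) x (e i), e i⟫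
        = (1/(k:ℝ))*(1-P) + (C * T^2 * ⟪x-y, e i⟫^2 - C * ⟪y, e i⟫^2) := by
      intro i _
      rw [hkey i, he.1 i]
      ring
    rw [Finset.sum_congr rfl h1, Finset.sum_add_distrib, Finset.sum_const, Finset.card_univ,
      Fintype.card_fin, Finset.sum_sub_distrib, ← Finset.mul_sum, ← Finset.mul_sum,
      nsmul_eq_mul]
    field_simp
    ring
  -- geometry: e spans S
  have hspan : Submodule.span ℝ (Set.range e) = S := by
    have hle : Submodule.span ℝ (Set.range e) ≤ S :=
      Submodule.span_le.mpr (Set.range_subset_iff.mpr heS)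
    refine Submodule.eq_of_le_of_finrank_le hle ?_
    rw [hS, finrank_span_eq_card he.linearIndependent, Fintype.card_fin]
  -- projection of x - y on S
  have hinner_w : ∀ j, ⟪∑ i, ⟪x-y, e i⟫ • e i, e j⟫ = ⟪x-y, e j⟫ := by
    intro j
    rw [sum_inner]
    simp only [real_inner_smul_left, orthonormal_iff_ite.mp he, mul_ite, mul_one, mul_zero,
      Finset.sum_ite_eq', Finset.mem_univ, if_true]
  have hworth : ∀ j, ⟪x - y - ∑ i, ⟪x-y, e i⟫ • e i, e j⟫ = 0 := by
    intro j
    rw [inner_sub_left, hinner_w j, sub_self]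
  have hwS : (∑ i, ⟪x-y, e i⟫ • e i) ∈ S :=
    Submodule.sum_mem _ (fun i _ => Submodule.smul_mem _ _ (heS i))
  have hw2 : ⟪∑ i, ⟪x-y, e i⟫ • e i, (∑ i, ⟪x-y, e i⟫ • e i)⟫ = ∑ i, ⟪x-y, e i⟫^2 := by
    rw [inner_sum]
    refine Finset.sum_congr rfl (fun j _ => ?_)
    rw [real_inner_smul_right, hinner_w j, sq]
  have hdecomp : ‖x - y‖^2 = (∑ i, ⟪x-y, e i⟫^2) + ‖x - y - ∑ i, ⟪x-y, e i⟫ • e i‖^2 := by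
    have hio : ⟪x - y - ∑ i, ⟪x-y, e i⟫ • e i, ∑ i, ⟪x-y, e i⟫ • e i⟫ = 0 := by
      rw [inner_sum]
      refine Finset.sum_eq_zero (fun j _ => ?_)
      rw [real_inner_smul_right, hworth j, mul_zero]
    have hsplit : x - y = (x - y - ∑ i, ⟪x-y, e i⟫ • e i) + ∑ i, ⟪x-y, e i⟫ • e i := by abel
    calc ‖x - y‖^2 = ‖(x - y - ∑ i, ⟪x-y, e i⟫ • e i) + ∑ i, ⟪x-y, e i⟫ • e i‖^2 := by
          rw [← hsplit]
      _ = ‖x - y - ∑ i, ⟪x-y, e i⟫ • e i‖^2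
            + 2*⟪x - y - ∑ i, ⟪x-y, e i⟫ • e i, ∑ i, ⟪x-y, e i⟫ • e i⟫
            + ‖∑ i, ⟪x-y, e i⟫ • e i‖^2 := by rw [norm_add_sq_real]
      _ = (∑ i, ⟪x-y, e i⟫^2) + ‖x - y - ∑ i, ⟪x-y, e i⟫ • e i‖^2 := by
          rw [hio, ← real_inner_self_eq_norm_sq (∑ i, ⟪x-y, e i⟫ • e i), hw2]; ring
  have hSaR : (∑ i, ⟪x-y, e i⟫^2) ≤ ‖x - y‖^2 := by
    nlinarith [sq_nonneg ‖x - y - ∑ i, ⟪x-y, e i⟫ • e i‖]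
  have hSb0 : (0:ℝ) ≤ ∑ i, ⟪y, e i⟫^2 := Finset.sum_nonneg (fun i _ => sq_nonneg _)
  -- equality characterizations
  have hSaiff : (∑ i, ⟪x-y, e i⟫^2) = ‖x - y‖^2 ↔ x - y ∈ S := by
    constructor
    · intro h
      have hz : ‖x - y - ∑ i, ⟪x-y, e i⟫ • e i‖^2 = 0 := by linarith
      have hz2 : x - y - ∑ i, ⟪x-y, e i⟫ • e i = 0 := by
        have := pow_eq_zero_iff (n := 2) (by norm_num) |>.mp hz
        exact norm_eq_zero.mp this
      have : x - y = ∑ i, ⟪x-y, e i⟫ • e i := by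
        rw [sub_eq_zero] at hz2; exact hz2
      rw [this]; exact hwS
    · intro h
      have hker : Submodule.span ℝ (Set.range e)
          ≤ LinearMap.ker ((innerSL ℝ (x - y - ∑ i, ⟪x-y, e i⟫ • e i) : EuclideanSpace ℝ (Fin n) →ₗ[ℝ] ℝ)) := by
        rw [Submodule.span_le]
        rintro _ ⟨j, rfl⟩
        simp only [SetLike.mem_coe, LinearMap.mem_ker, ContinuousLinearMap.coe_coe,
          innerSL_apply_apply]
        exact hworth j
      have hxyS : x - y - ∑ i, ⟪x-y, e i⟫ • e i ∈ S := S.sub_mem h hwS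
      rw [← hspan] at hxyS
      have h0 : ⟪x - y - ∑ i, ⟪x-y, e i⟫ • e i, x - y - ∑ i, ⟪x-y, e i⟫ • e i⟫ = 0 := by
        have h00 := hker hxyS
        rw [LinearMap.mem_ker] at h00
        simp only [ContinuousLinearMap.coe_coe, innerSL_apply_apply] at h00
        exact h00
      have hz2 : x - y - ∑ i, ⟪x-y, e i⟫ • e i = 0 := inner_self_eq_zero.mp h0
      have : ‖x - y - ∑ i, ⟪x-y, e i⟫ • e i‖^2 = 0 := by rw [hz2]; simp
      linarith
  have hSbiff : (∑ i, ⟪y, e i⟫^2) = 0 ↔ ∀ v ∈ S, ⟪y, v⟫ = 0 := by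
    constructor
    · intro h v hv
      have hzero : ∀ i, ⟪y, e i⟫ = 0 := by
        intro i
        have h2 := (Finset.sum_eq_zero_iff_of_nonneg (fun i _ => sq_nonneg ⟪y, e i⟫)).mp h
          i (Finset.mem_univ i)
        exact pow_eq_zero_iff (n := 2) (by norm_num) |>.mp h2
      have hker : Submodule.span ℝ (Set.range e) ≤ LinearMap.ker ((innerSL ℝ y : EuclideanSpace ℝ (Fin n) →ₗ[ℝ] ℝ)) := by
        rw [Submodule.span_le]
        rintro _ ⟨j, rfl⟩
        simp only [SetLike.mem_coe, LinearMap.mem_ker, ContinuousLinearMap.coe_coe,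
          innerSL_apply_apply]
        exact hzero j
      rw [← hspan] at hv
      have h00 := hker hv
      rw [LinearMap.mem_ker] at h00
      simp only [ContinuousLinearMap.coe_coe, innerSL_apply_apply] at h00
      exact h00
    · intro h
      refine Finset.sum_eq_zero (fun i _ => ?_)
      rw [h (e i) (heS i)]; ring
  constructor
  · rw [hsum]
    nlinarith [mul_nonneg (mul_pos hC (pow_pos hT 2)).le (sub_nonneg.mpr hSaR),
      mul_nonneg hC.le hSb0, hPeq]
  · rw [hsum]
    constructor
    · intro heq
      have h0 : C * (T^2*((∑ i, ⟪x-y, e i⟫^2) - ‖x - y‖^2) - (∑ i, ⟪y, e i⟫^2)) = 0 := by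
        linear_combination heq + hPeq
      have h1 : T^2*((∑ i, ⟪x-y, e i⟫^2) - ‖x - y‖^2) - (∑ i, ⟪y, e i⟫^2) = 0 :=
        (mul_eq_zero.mp h0).resolve_left hC.ne'
      have hSa : (∑ i, ⟪x-y, e i⟫^2) = ‖x - y‖^2 := by
        nlinarith [pow_pos hT 2, hSaR, hSb0, h1]
      have hSb : (∑ i, ⟪y, e i⟫^2) = 0 := by
        nlinarith [hSa, h1]
      exact ⟨hSaiff.mp hSa, hSbiff.mp hSb⟩
    · rintro ⟨h1, h2⟩
      rw [hSaiff.mpr h1, hSbiff.mpr h2, hPeq]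
      ring
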